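/- Let n ≥ 2 and z ∈ {0,1}^n with 0 < ‖z‖₁ < n. With w(s) = (C(n,s)·s·(n-s))^{-1}, the quantity w(‖z‖₁)·(z - (‖z‖₁/n)·1)ᵀ·(n·I - 11ᵀ)·(z - (‖z‖₁/n)·1) equals C(n, ‖z‖₁)^{-1}. -/

import Mathlib

open Matrix

theorem leverage_score_closed_form (n : ℕ) (hn : 2 ≤ n)
    (w : ℕ → ℝ) (hw : ∀ t, 1 ≤ t → t ≤ n - 1 → w t = ((n.choose t : ℝ) * t * (n - t))⁻¹)
    (S : Finset (Fin n)) (hS0 : 0 < S.card) (hSn : S.card < n)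
    (z : Fin n → ℝ) (hz : ∀ i, z i = if i ∈ S then 1 else 0)
    (u : Fin n → ℝ) (hu : u = fun i => z i - (S.card : ℝ) / n) :
    w S.card *
      (u ⬝ᵥ (((n : ℝ) • (1 : Matrix (Fin n) (Fin n) ℝ)
        - Matrix.of (fun (_ _ : Fin n) => (1 : ℝ))) *ᵥ u)) =
      ((n.choose S.card : ℝ))⁻¹ := by
  have hn0 : (0:ℝ) < n := by positivity
  have hnne : (n:ℝ) ≠ 0 := ne_of_gt hn0
  set s : ℕ := S.card with hs
  have hsumz : ∑ i, z i = (s : ℝ) := by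
    simp only [hz]
    rw [Finset.sum_ite_mem, Finset.univ_inter]
    simp
    exact hs.symm
  have hzsq : ∀ i, z i * z i = z i := by
    intro i; rw [hz i]; by_cases h : i ∈ S <;> simp [h]
  have hsumu : ∑ i, u i = 0 := by
    subst hu
    rw [Finset.sum_sub_distrib, hsumz, Finset.sum_const, Finset.card_univ,
      Fintype.card_fin, nsmul_eq_mul]
    field_simp
    ring
  have hsumsq : ∑ i, u i * u i = (s : ℝ) - (s:ℝ)^2 / n := by
    subst hu
    have : ∀ i, (z i - (s:ℝ)/n) * (z i - (s:ℝ)/n)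
        = z i - (2*(s:ℝ)/n) * z i + ((s:ℝ)/n)^2 := by
      intro i
      linear_combination hzsq i
    simp only [this]
    rw [Finset.sum_add_distrib, Finset.sum_sub_distrib, hsumz, ← Finset.mul_sum, hsumz,
      Finset.sum_const, Finset.card_univ, Fintype.card_fin, nsmul_eq_mul]
    field_simp
    ring
  have hmv : (((n : ℝ) • (1 : Matrix (Fin n) (Fin n) ℝ)
        - Matrix.of (fun (_ _ : Fin n) => (1 : ℝ))) *ᵥ u) = fun i => (n:ℝ) * u i := by
    funext i
    simp [mulVec, dotProduct, sub_mul, Finset.sum_sub_distrib, one_apply,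
      Finset.mul_sum, hsumu, Finset.sum_ite_eq]
  rw [hmv]
  have hdot : (u ⬝ᵥ fun i => (n:ℝ) * u i) = (n:ℝ) * ((s:ℝ) - (s:ℝ)^2/n) := by
    simp only [dotProduct]
    rw [← hsumsq, Finset.mul_sum]
    congr 1; funext i; ring
  rw [hdot, hw s hS0 (by omega)]
  have hs0 : (0:ℝ) < s := by exact_mod_cast hS0
  have hns : (s:ℝ) < n := by exact_mod_cast hSn
  have hC : (0:ℝ) < (n.choose s : ℝ) := by
    exact_mod_cast Nat.choose_pos (le_of_lt hSn)
  have h1 : (s:ℝ) ≠ 0 := ne_of_gt hs0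
  have h2 : (n:ℝ) - s ≠ 0 := sub_ne_zero.mpr (ne_of_gt hns)
  have hCne : (n.choose s : ℝ) ≠ 0 := ne_of_gt hC
  have key : (n:ℝ)*((s:ℝ) - (s:ℝ)^2/n) = (s:ℝ)*((n:ℝ)-(s:ℝ)) := by
    field_simp
  rw [key]
  field_simp
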